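/- Let n ≥ 1 and let a, a′, b, b′ be Hermitian n×n complex matrices with a² = a′² = b² = b′² = 1 (the identity matrix), such that each of a, a′ commutes with each of b, b′. Let W be a positive semidefinite n×n complex matrix with trace 1. Then |Tr(W(aa′ − a′a)(bb′ − b′b))| ≤ 4. -/

import Mathlib

open Matrix ComplexOrder

/-- Cauchy–Schwarz for the Frobenius inner product. -/
lemma frob_cs (n : ℕ) (A B : Matrix (Fin n) (Fin n) ℂ) :
    ‖(Aᴴ * B).trace‖ ≤
      Real.sqrt ((Aᴴ * A).trace.re) * Real.sqrt ((Bᴴ * B).trace.re) := by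
  let f : EuclideanSpace ℂ (Fin n × Fin n) := WithLp.toLp 2 (fun p : Fin n × Fin n => A p.2 p.1)
  let g : EuclideanSpace ℂ (Fin n × Fin n) := WithLp.toLp 2 (fun p : Fin n × Fin n => B p.2 p.1)
  have h1 : (Aᴴ * B).trace = inner ℂ f g := by
    simp [Matrix.trace, Matrix.diag, Matrix.mul_apply, PiLp.inner_apply,
      Fintype.sum_prod_type, Matrix.conjTranspose_apply, RCLike.inner_apply, f, g, mul_comm]
  have hreA : (Aᴴ * A).trace.re = ∑ p : Fin n × Fin n, ‖f p‖ ^ 2 := by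
    simp [Matrix.trace, Matrix.diag, Matrix.mul_apply, Fintype.sum_prod_type,
      Matrix.conjTranspose_apply, f, Complex.conj_mul', ← Complex.ofReal_pow]
  have hreB : (Bᴴ * B).trace.re = ∑ p : Fin n × Fin n, ‖g p‖ ^ 2 := by
    simp [Matrix.trace, Matrix.diag, Matrix.mul_apply, Fintype.sum_prod_type,
      Matrix.conjTranspose_apply, g, Complex.conj_mul', ← Complex.ofReal_pow]
  have hfn : Real.sqrt ((Aᴴ * A).trace.re) = ‖f‖ := by
    rw [hreA, EuclideanSpace.norm_eq]
  have hgn : Real.sqrt ((Bᴴ * B).trace.re) = ‖g‖ := by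
    rw [hreB, EuclideanSpace.norm_eq]
  rw [h1, hfn, hgn]
  exact norm_inner_le_norm f g

open scoped MatrixOrder in
/-- For a density matrix `W` and unitary `U`, `|Tr(W U)| ≤ 1`. -/
lemma trace_W_U_le_one {n : ℕ} (W U : Matrix (Fin n) (Fin n) ℂ)
    (hW : W.PosSemidef) (hWtr : W.trace = 1) (hU : Uᴴ * U = 1) :
    ‖(W * U).trace‖ ≤ 1 := by
  set S := CFC.sqrt W with hS
  have hSH : Sᴴ = S := (CFC.sqrt_nonneg W).posSemidef.isHermitian
  have hSS : S * S = W := CFC.sqrt_mul_sqrt_self W hW.nonneg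
  have h1 : W * U = Sᴴ * (S * U) := by rw [hSH, ← Matrix.mul_assoc, hSS]
  have h2 : (Sᴴ * S).trace = 1 := by rw [hSH, hSS, hWtr]
  have hUU : U * Uᴴ = 1 := mul_eq_one_comm.mp hU
  have h3 : ((S * U)ᴴ * (S * U)).trace = 1 := by
    rw [Matrix.conjTranspose_mul, hSH, Matrix.mul_assoc, ← Matrix.mul_assoc S, hSS,
      Matrix.trace_mul_comm, Matrix.mul_assoc, hUU, Matrix.mul_one, hWtr]
  have := frob_cs n S (S * U)
  rw [h2, h3] at this
  simpa [h1] using this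

theorem commutator_trace_bound
    (n : ℕ) (hn : 1 ≤ n)
    (a a' b b' W : Matrix (Fin n) (Fin n) ℂ)
    (ha : a.IsHermitian) (ha' : a'.IsHermitian)
    (hb : b.IsHermitian) (hb' : b'.IsHermitian)
    (ha2 : a * a = 1) (ha'2 : a' * a' = 1)
    (hb2 : b * b = 1) (hb'2 : b' * b' = 1)
    (hab : Commute a b) (hab' : Commute a b')
    (ha'b : Commute a' b) (ha'b' : Commute a' b')
    (hW : W.PosSemidef) (hWtr : W.trace = 1) :
    ‖(W * ((a * a' - a' * a) * (b * b' - b' * b))).trace‖ ≤ 4 := by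
  -- each of the four products is unitary
  have key : ∀ x y z w : Matrix (Fin n) (Fin n) ℂ,
      x.IsHermitian → y.IsHermitian → z.IsHermitian → w.IsHermitian →
      x * x = 1 → y * y = 1 → z * z = 1 → w * w = 1 →
      ‖(W * (x * y * (z * w))).trace‖ ≤ 1 := by
    intro x y z w hx hy hz hw hx2 hy2 hz2 hw2
    apply trace_W_U_le_one _ _ hW hWtr
    have : (x * y * (z * w))ᴴ = w * z * (y * x) := by
      simp [Matrix.conjTranspose_mul, hx.eq, hy.eq, hz.eq, hw.eq, Matrix.mul_assoc]
    rw [this]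
    calc w * z * (y * x) * (x * y * (z * w))
        = w * (z * (y * (x * x) * y) * z) * w := by noncomm_ring
      _ = 1 := by rw [hx2, Matrix.mul_one, hy2, Matrix.mul_one, hz2, Matrix.mul_one, hw2]
  have expand : W * ((a * a' - a' * a) * (b * b' - b' * b))
      = W * (a * a' * (b * b')) - W * (a * a' * (b' * b))
        - W * (a' * a * (b * b')) + W * (a' * a * (b' * b)) := by noncomm_ring
  rw [expand, Matrix.trace_add, Matrix.trace_sub, Matrix.trace_sub]
  have t1 := key a a' b b' ha ha' hb hb' ha2 ha'2 hb2 hb'2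
  have t2 := key a a' b' b ha ha' hb' hb ha2 ha'2 hb'2 hb2
  have t3 := key a' a b b' ha' ha hb hb' ha'2 ha2 hb2 hb'2
  have t4 := key a' a b' b ha' ha hb' hb ha'2 ha2 hb'2 hb2
  have tri : ∀ p q r s : ℂ, ‖p - q - r + s‖
      ≤ ‖p‖ + ‖q‖ + ‖r‖ + ‖s‖ := by
    intro p q r s
    have h1 := norm_add_le (p - q - r) s
    have h2 := norm_add_le (p - q) (-r)
    have h3 := norm_add_le p (-q)
    rw [norm_neg] at h2 h3
    rw [← sub_eq_add_neg] at h2 h3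
    linarith
  have := tri ((W * (a * a' * (b * b'))).trace) ((W * (a * a' * (b' * b))).trace)
    ((W * (a' * a * (b * b'))).trace) ((W * (a' * a * (b' * b))).trace)
  linarith
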